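/- arXiv:2411.00218 — 3 statements merged into one kernel-verified Lean document; each statement's English description precedes it below -/
import Mathlib

section
/- Let M = (π₀, K, g) be a state-space model, let α_t : 𝒳 → 𝒳 be measurable maps with α₀ the identity, let M^α = (π₀, K^α, g) be the nudged model and M̄^α = (π₀, K̄^α, g^α) the alternative nudged model. Then for every t ≥ 1 and every integrable test function f : 𝒳 → ℝ: (i) ξ_t^α(f) = ξ̄_t^α(f ∘ α_t), and (ii) π_t^α(f) = π̄_t^α(f ∘ α_t). -/
open MeasureTheory ENNReal

namespace Nudging

variable {X : Type*} [MeasurableSpace X]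

/-- Total variation norm `‖μ - ν‖_TV = |sup_F (μ-ν)(F) - inf_F (μ-ν)(F)|` of the difference of
two (finite) measures. -/
noncomputable def tvDist (μ ν : Measure X) : ℝ :=
  ((⨆ (F : Set X) (_ : MeasurableSet F), (μ F - ν F)) +
   (⨆ (F : Set X) (_ : MeasurableSet F), (ν F - μ F))).toReal

/-- Supremum norm of a real-valued function. -/
noncomputable def supNorm {α : Type*} (f : α → ℝ) : ℝ := ⨆ x, |f x|

/-- The (normalised) filter measures `π_t` of a state-space model `(π0, K, g)`:
`π_0 = π0` and `π_t(f) = ξ_t(f g_t)/ξ_t(g_t)` where `ξ_t = K_t π_{t-1}`. -/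
noncomputable def filt (π0 : Measure X) (K : ℕ → X → Measure X) (g : ℕ → X → ℝ) :
    ℕ → Measure X
  | 0 => π0
  | t + 1 =>
      let ξ : Measure X := (filt π0 K g t).bind (K (t + 1))
      let ν : Measure X := ξ.withDensity fun x => ENNReal.ofReal (g (t + 1) x)
      (ν Set.univ)⁻¹ • ν

/-- The one-step-ahead predictive measure `ξ_t = K_t π_{t-1}` (for `t ≥ 1`). -/
noncomputable def pred (π0 : Measure X) (K : ℕ → X → Measure X) (g : ℕ → X → ℝ)
    (t : ℕ) : Measure X :=
  (filt π0 K g (t - 1)).bind (K t)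

/-- The Bayesian evidence (marginal likelihood) `p_T(y_{1:T}|M) = ∏_{t=1}^T ξ_t(g_t)`. -/
noncomputable def evidence (π0 : Measure X) (K : ℕ → X → Measure X) (g : ℕ → X → ℝ)
    (T : ℕ) : ℝ :=
  ∏ t ∈ Finset.Icc 1 T, ∫ x, g t x ∂(pred π0 K g t)

/-- The nudged kernel `K_t^α(x,·)`: the pushforward of `K_t(x,·)` under the map `a t`. -/
noncomputable def nudged (K : ℕ → X → Measure X) (a : ℕ → X → X) : ℕ → X → Measure X :=
  fun t x => (K t x).map (a t)

/-- The alternative nudged kernel `K̄_t^α(x,·) := K_t(α_{t-1}(x), ·)`. -/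
noncomputable def altKernel (K : ℕ → X → Measure X) (a : ℕ → X → X) : ℕ → X → Measure X :=
  fun t x => K t (a (t - 1) x)

/-- The modified likelihoods `g_t^α := g_t ∘ α_t` of the alternative nudged model. -/
def altG (g : ℕ → X → ℝ) (a : ℕ → X → X) : ℕ → X → ℝ := fun t x => g t (a t x)

/-- Dobrushin (induced) norm of a Markov kernel:
`‖K‖ = sup_{x,x'} ‖K(x,·) - K(x',·)‖_TV`. -/
noncomputable def dobNorm (K : X → Measure X) : ℝ :=
  ⨆ p : X × X, tvDist (K p.1) (K p.2)



lemma bind_map_left (μ : Measure X) {h : X → X} {κ : X → Measure X}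
    (hh : Measurable h) (hκ : Measurable κ) :
    (μ.map h).bind κ = μ.bind (fun x => κ (h x)) := by
  ext s hs
  have h1 : Measurable fun x => κ x s := (Measure.measurable_coe hs).comp hκ
  rw [Measure.bind_apply hs hκ.aemeasurable, lintegral_map h1 hh, Measure.bind_apply hs (show Measurable fun x => κ (h x) from hκ.comp hh).aemeasurable]

lemma map_bind_right (μ : Measure X) {h : X → X} {κ : X → Measure X}
    (hh : Measurable h) (hκ : Measurable κ) :
    (μ.bind κ).map h = μ.bind (fun x => (κ x).map h) := by
  ext s hs
  have h1 : Measurable fun x => (κ x).map h := (Measure.measurable_map h hh).comp hκ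
  rw [Measure.map_apply hh hs, Measure.bind_apply (hh hs) hκ.aemeasurable, Measure.bind_apply hs h1.aemeasurable]
  simp only [Measure.map_apply hh hs]

lemma withDensity_map_eq (μ : Measure X) {h : X → X} {w : X → ℝ≥0∞}
    (hh : Measurable h) (hw : Measurable w) :
    (μ.map h).withDensity w = (μ.withDensity (w ∘ h)).map h := by
  ext s hs
  rw [withDensity_apply _ hs, setLIntegral_map hs hw hh, Measure.map_apply hh hs,
    withDensity_apply _ (hh hs)]
  rfl

lemma filt_corr {X : Type*} [MeasurableSpace X]
    (π0 : Measure X) (K : ℕ → X → Measure X) (hKmeas : ∀ t, Measurable (K t))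
    (g : ℕ → X → ℝ) (hgmeas : ∀ t, Measurable (g t))
    (a : ℕ → X → X) (hameas : ∀ t, Measurable (a t)) (ha0 : a 0 = fun x => x) :
    ∀ t, filt π0 (nudged K a) g t =
      (filt π0 (altKernel K a) (altG g a) t).map (a t) := by
  intro t
  induction t with
  | zero => simp [filt, ha0, Measure.map_id]
  | succ t ih =>
    have hκn : Measurable (nudged K a (t + 1)) :=
      (Measure.measurable_map _ (hameas (t + 1))).comp (hKmeas (t + 1))
    have hκa : Measurable (altKernel K a (t + 1)) :=
      (hKmeas (t + 1)).comp (hameas t)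
    have hξ : (filt π0 (nudged K a) g t).bind (nudged K a (t + 1)) =
        ((filt π0 (altKernel K a) (altG g a) t).bind (altKernel K a (t + 1))).map (a (t + 1)) := by
      rw [ih, bind_map_left _ (hameas t) hκn,
        map_bind_right _ (hameas (t + 1)) hκa]
      rfl
    show _ = _
    simp only [filt, hξ]
    rw [withDensity_map_eq _ (hameas (t + 1)) ((hgmeas (t + 1)).ennreal_ofReal)]
    rw [Measure.map_apply (hameas (t + 1)) MeasurableSet.univ]
    simp only [Set.preimage_univ]
    rw [Measure.map_smul]
    rfl

lemma pred_corr {X : Type*} [MeasurableSpace X]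
    (π0 : Measure X) (K : ℕ → X → Measure X) (hKmeas : ∀ t, Measurable (K t))
    (g : ℕ → X → ℝ) (hgmeas : ∀ t, Measurable (g t))
    (a : ℕ → X → X) (hameas : ∀ t, Measurable (a t)) (ha0 : a 0 = fun x => x)
    (t : ℕ) (ht : 1 ≤ t) :
    pred π0 (nudged K a) g t =
      (pred π0 (altKernel K a) (altG g a) t).map (a t) := by
  obtain ⟨s, rfl⟩ := Nat.exists_eq_add_of_le ht
  have hκn : Measurable (nudged K a (1 + s)) :=
    (Measure.measurable_map _ (hameas (1 + s))).comp (hKmeas (1 + s))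
  have hκa : Measurable (altKernel K a (1 + s)) := by
    have : altKernel K a (1 + s) = fun x => K (1 + s) (a (1 + s - 1) x) := rfl
    rw [this]
    exact (hKmeas (1 + s)).comp (hameas (1 + s - 1))
  unfold pred
  rw [filt_corr π0 K hKmeas g hgmeas a hameas ha0 (1 + s - 1),
    bind_map_left _ (hameas (1 + s - 1)) hκn,
    map_bind_right _ (hameas (1 + s)) hκa]
  rfl

/-- **Lemma (correspondence between the nudged and the alternative nudged model).**
Let `M^α = (π0, K^α, g)` be the nudged model and `M̄^α = (π0, K̄^α, g^α)` the
alternative nudged model (with `α₀` the identity).  Then for every `t ≥ 1` and every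
integrable test function `f`: `ξ_t^α(f) = ξ̄_t^α(f ∘ α_t)` and
`π_t^α(f) = π̄_t^α(f ∘ α_t)`. -/
theorem nudged_alt_correspondence
    {X : Type*} [MeasurableSpace X]
    (π0 : Measure X) (hπ0 : IsProbabilityMeasure π0)
    (K : ℕ → X → Measure X)
    (hKmeas : ∀ t, Measurable (K t))
    (hKprob : ∀ t x, IsProbabilityMeasure (K t x))
    (g : ℕ → X → ℝ)
    (hg0 : ∀ t x, 0 ≤ g t x)
    (hgmeas : ∀ t, Measurable (g t))
    (hgbdd : ∀ t, ∃ C : ℝ, ∀ x, g t x ≤ C)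
    (a : ℕ → X → X) (hameas : ∀ t, Measurable (a t)) (ha0 : a 0 = fun x => x)
    (t : ℕ) (ht : 1 ≤ t)
    (f : X → ℝ) (hfmeas : Measurable f)
    (hfint : Integrable f (pred π0 (nudged K a) g t)) :
    (∫ x, f x ∂(pred π0 (nudged K a) g t) =
        ∫ x, f (a t x) ∂(pred π0 (altKernel K a) (altG g a) t)) ∧
    (∫ x, f x ∂(filt π0 (nudged K a) g t) =
        ∫ x, f (a t x) ∂(filt π0 (altKernel K a) (altG g a) t)) := by
  constructor
  · rw [pred_corr π0 K hKmeas g hgmeas a hameas ha0 t ht,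
      integral_map (hameas t).aemeasurable hfmeas.aestronglyMeasurable]
  · rw [filt_corr π0 K hKmeas g hgmeas a hameas ha0 t,
      integral_map (hameas t).aemeasurable hfmeas.aestronglyMeasurable]

end Nudging
end

section
/- In the setting of the comparison between the predictive measures ξ_t of a state-space model M and the predictive measures ξ̄_t^α of its alternative nudged model M̄^α built from parametric nudging transformations, if the nudging parameter γ is selected such that Δ_{g_t}(γ) ≥ ‖g_t‖_∞ ‖ξ_t − ξ̄_t^α‖_TV, then the normalisation constants satisfy ξ_t(g_t) ≤ ξ̄_t^α(g_t^α). -/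
open MeasureTheory ENNReal

namespace Nudging

variable {X : Type*} [MeasurableSpace X]

/-- The nudging maps obtained from a parametric family `α` and a sequence of nudging
parameters `γseq` (with `α₀` the identity). -/
noncomputable def aOf {X : Type*} (α : ℕ → X → ℝ → X) (γseq : ℕ → ℝ) : ℕ → X → X :=
  fun t x => if t = 0 then x else α t x (γseq t)

lemma filt_univ_le (π0 : Measure X) [IsProbabilityMeasure π0]
    (K : ℕ → X → Measure X) (hK : ∀ t, Measurable (K t))
    (hKp : ∀ t x, IsProbabilityMeasure (K t x)) (g : ℕ → X → ℝ) :
    ∀ n, filt π0 K g n Set.univ ≤ 1 := by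
  intro n
  induction n with
  | zero => simp [filt]
  | succ t ih =>
    rw [filt]
    simp only [Measure.smul_apply, smul_eq_mul]
    rcases eq_or_ne ((((filt π0 K g t).bind (K (t + 1))).withDensity
        fun x => ENNReal.ofReal (g (t + 1) x)) Set.univ) 0 with h | h
    · simp [h]
    rcases eq_or_ne ((((filt π0 K g t).bind (K (t + 1))).withDensity
        fun x => ENNReal.ofReal (g (t + 1) x)) Set.univ) ∞ with h' | h'
    · simp [h']
    · rw [ENNReal.inv_mul_cancel h h']

lemma pred_univ_le (π0 : Measure X) [IsProbabilityMeasure π0]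
    (K : ℕ → X → Measure X) (hK : ∀ t, Measurable (K t))
    (hKp : ∀ t x, IsProbabilityMeasure (K t x)) (g : ℕ → X → ℝ) (t : ℕ) :
    pred π0 K g t Set.univ ≤ 1 := by
  rw [pred, Measure.bind_apply MeasurableSet.univ (hK t).aemeasurable]
  calc ∫⁻ x, K t x Set.univ ∂(filt π0 K g (t - 1))
      = ∫⁻ _, 1 ∂(filt π0 K g (t - 1)) := by
        apply lintegral_congr; intro x; exact (hKp t x).measure_univ
    _ ≤ 1 := by
        rw [lintegral_one]; exact filt_univ_le π0 K hK hKp g (t - 1)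

lemma pred_isFiniteMeasure (π0 : Measure X) [IsProbabilityMeasure π0]
    (K : ℕ → X → Measure X) (hK : ∀ t, Measurable (K t))
    (hKp : ∀ t x, IsProbabilityMeasure (K t x)) (g : ℕ → X → ℝ) (t : ℕ) :
    IsFiniteMeasure (pred π0 K g t) :=
  ⟨lt_of_le_of_lt (pred_univ_le π0 K hK hKp g t) one_lt_top⟩

/-- Key total-variation bound: for a nonnegative bounded measurable `f`,
`∫ f dμ ≤ ∫ f dν + C * tvDist μ ν`. -/
lemma integral_le_integral_add_tv (μ ν : Measure X) [IsFiniteMeasure μ] [IsFiniteMeasure ν]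
    (f : X → ℝ) (hf : Measurable f) (h0 : ∀ x, 0 ≤ f x) (C : ℝ) (hC0 : 0 ≤ C)
    (hC : ∀ x, f x ≤ C) :
    ∫ x, f x ∂μ ≤ ∫ x, f x ∂ν + C * tvDist μ ν := by
  set S₁ : ℝ≥0∞ := ⨆ (F : Set X) (_ : MeasurableSet F), (μ F - ν F) with hS₁
  set S₂ : ℝ≥0∞ := ⨆ (F : Set X) (_ : MeasurableSet F), (ν F - μ F) with hS₂
  have hS₁top : S₁ ≤ μ Set.univ := by
    refine iSup₂_le fun F hF => ?_
    exact le_trans (tsub_le_self) (measure_mono (Set.subset_univ F))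
  have hS₂top : S₂ ≤ ν Set.univ := by
    refine iSup₂_le fun F hF => ?_
    exact le_trans (tsub_le_self) (measure_mono (Set.subset_univ F))
  have hSfin : S₁ + S₂ ≠ ∞ :=
    (ENNReal.add_lt_top.2 ⟨lt_of_le_of_lt hS₁top (measure_lt_top μ _),
      lt_of_le_of_lt hS₂top (measure_lt_top ν _)⟩).ne
  obtain ⟨P, hP, h1, h2⟩ := hahn_decomposition (μ := μ) (ν := ν)
  -- lintegral version
  have hres : ν.restrict P ≤ μ.restrict P := by
    refine Measure.le_iff.2 fun s hs => ?_
    rw [Measure.restrict_apply hs, Measure.restrict_apply hs]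
    exact h1 _ (hs.inter hP) Set.inter_subset_right
  have hresC : μ.restrict Pᶜ ≤ ν.restrict Pᶜ := by
    refine Measure.le_iff.2 fun s hs => ?_
    rw [Measure.restrict_apply hs, Measure.restrict_apply hs]
    exact h2 _ (hs.inter hP.compl) Set.inter_subset_right
  set F : X → ℝ≥0∞ := fun x => ENNReal.ofReal (f x) with hFdef
  have hFmeas : Measurable F := hf.ennreal_ofReal
  have hFbd : ∀ x, F x ≤ ENNReal.ofReal C := fun x => ENNReal.ofReal_le_ofReal (hC x)
  have keyP : ∫⁻ x in P, F x ∂μ ≤ ∫⁻ x in P, F x ∂ν + ENNReal.ofReal C * S₁ := by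
    have hsplit : μ.restrict P = ν.restrict P + (μ.restrict P - ν.restrict P) := by
      rw [add_comm, Measure.sub_add_cancel_of_le hres]
    calc ∫⁻ x in P, F x ∂μ
        = ∫⁻ x, F x ∂(ν.restrict P) + ∫⁻ x, F x ∂(μ.restrict P - ν.restrict P) := by
          conv_lhs => rw [show (∫⁻ x in P, F x ∂μ) = ∫⁻ x, F x ∂(μ.restrict P) from rfl,
            hsplit]
          rw [lintegral_add_measure]
      _ ≤ ∫⁻ x in P, F x ∂ν + ENNReal.ofReal C * S₁ := by
          refine add_le_add le_rfl ?_
          calc ∫⁻ x, F x ∂(μ.restrict P - ν.restrict P)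
              ≤ ∫⁻ _, ENNReal.ofReal C ∂(μ.restrict P - ν.restrict P) :=
                lintegral_mono hFbd
            _ = ENNReal.ofReal C * (μ.restrict P - ν.restrict P) Set.univ := by
                rw [lintegral_const]
            _ ≤ ENNReal.ofReal C * S₁ := by
                refine mul_le_mul_right ?_ _
                rw [Measure.sub_apply MeasurableSet.univ hres,
                  Measure.restrict_apply_univ, Measure.restrict_apply_univ]
                exact le_iSup_of_le P (le_iSup_of_le hP le_rfl)
  have keyPc : ∫⁻ x in Pᶜ, F x ∂μ ≤ ∫⁻ x in Pᶜ, F x ∂ν := lintegral_mono' hresC le_rfl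
  have key : ∫⁻ x, F x ∂μ ≤ ∫⁻ x, F x ∂ν + ENNReal.ofReal C * (S₁ + S₂) := by
    calc ∫⁻ x, F x ∂μ = ∫⁻ x in P, F x ∂μ + ∫⁻ x in Pᶜ, F x ∂μ :=
          (lintegral_add_compl F hP).symm
      _ ≤ (∫⁻ x in P, F x ∂ν + ENNReal.ofReal C * S₁) + ∫⁻ x in Pᶜ, F x ∂ν :=
          add_le_add keyP keyPc
      _ = (∫⁻ x in P, F x ∂ν + ∫⁻ x in Pᶜ, F x ∂ν) + ENNReal.ofReal C * S₁ := by ring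
      _ ≤ ∫⁻ x, F x ∂ν + ENNReal.ofReal C * (S₁ + S₂) := by
          rw [lintegral_add_compl F hP]
          exact add_le_add le_rfl (mul_le_mul_right le_self_add _)
  have hFνfin : ∫⁻ x, F x ∂ν ≠ ∞ := by
    refine ne_of_lt (lt_of_le_of_lt (lintegral_mono hFbd) ?_)
    rw [lintegral_const]
    exact ENNReal.mul_lt_top ofReal_lt_top (measure_lt_top ν _)
  have hμint : ∫ x, f x ∂μ = (∫⁻ x, F x ∂μ).toReal :=
    integral_eq_lintegral_of_nonneg_ae (Filter.Eventually.of_forall h0)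
      hf.aestronglyMeasurable
  have hνint : ∫ x, f x ∂ν = (∫⁻ x, F x ∂ν).toReal :=
    integral_eq_lintegral_of_nonneg_ae (Filter.Eventually.of_forall h0)
      hf.aestronglyMeasurable
  rw [hμint, hνint, tvDist, ← hS₁, ← hS₂]
  have hrhs : (∫⁻ x, F x ∂ν + ENNReal.ofReal C * (S₁ + S₂)).toReal
      = (∫⁻ x, F x ∂ν).toReal + C * (S₁ + S₂).toReal := by
    rw [ENNReal.toReal_add hFνfin (ENNReal.mul_ne_top ofReal_ne_top hSfin),
      ENNReal.toReal_mul, ENNReal.toReal_ofReal hC0]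
  rw [← hrhs]
  exact ENNReal.toReal_mono (by
    exact ENNReal.add_ne_top.2 ⟨hFνfin, ENNReal.mul_ne_top ofReal_ne_top hSfin⟩) key

/-- **Corollary (selection of the nudging parameter increases the normalisation
constant).**  If the nudging parameter `γ` is selected so that
`Δ_{g_t}(γ) ≥ ‖g_t‖_∞ ‖ξ_t - ξ̄_t^α‖_TV`, then `ξ_t(g_t) ≤ ξ̄_t^α(g_t^α)`. -/
theorem normalisation_increase_of_selection
    {d : ℕ}
    (π0 : Measure (EuclideanSpace ℝ (Fin d))) (hπ0 : IsProbabilityMeasure π0)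
    (K : ℕ → EuclideanSpace ℝ (Fin d) → Measure (EuclideanSpace ℝ (Fin d)))
    (hKmeas : ∀ t, Measurable (K t))
    (hKprob : ∀ t x, IsProbabilityMeasure (K t x))
    (g : ℕ → EuclideanSpace ℝ (Fin d) → ℝ)
    (hg0 : ∀ t x, 0 ≤ g t x)
    (hgmeas : ∀ t, Measurable (g t))
    (hgbdd : ∀ t, ∃ C : ℝ, ∀ x, g t x ≤ C)
    -- `{α_t}` is a family of parametric nudging transformations
    (α : ℕ → EuclideanSpace ℝ (Fin d) → ℝ → EuclideanSpace ℝ (Fin d))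
    (hαmeas : ∀ t γ', Measurable fun x => α t x γ')
    (hαcont : ∀ t x, ContinuousOn (fun γ' => α t x γ') (Set.Ici 0))
    (hα0 : ∀ t x, α t x 0 = x)
    (Γ : ℕ → ℝ) (hΓ : ∀ t, 0 < Γ t)
    (hinc : ∀ t x, ∀ γ' ∈ Set.Icc (0 : ℝ) (Γ t), g t x ≤ g t (α t x γ'))
    (hΔpos : ∀ t, ∀ γ' ∈ Set.Ioc (0 : ℝ) (Γ t),
        0 < ∫ x, (g t (α t x γ') - g t x) ∂(pred π0 K g t))
    -- the parameters `γ_{1:t-1}` used to build the alternative nudged model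
    (γseq : ℕ → ℝ)
    (t : ℕ) (γ : ℝ) (hγ : γ ∈ Set.Icc (0 : ℝ) (Γ t))
    -- the selection criterion `Δ_{g_t}(γ) ≥ ‖g_t‖_∞ ‖ξ_t - ξ̄_t^α‖_TV`
    (hsel : supNorm (g t) *
          tvDist (pred π0 K g t)
            (pred π0 (altKernel K (aOf α γseq)) (altG g (aOf α γseq)) t) ≤
        ∫ x, (g t (α t x γ) - g t x) ∂(pred π0 K g t)) :
    ∫ x, g t x ∂(pred π0 K g t) ≤
      ∫ x, g t (α t x γ)
        ∂(pred π0 (altKernel K (aOf α γseq)) (altG g (aOf α γseq)) t) := by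
  set a := aOf α γseq with ha
  set μ := pred π0 K g t with hμ
  set ν := pred π0 (altKernel K a) (altG g a) t with hν
  have hameas : ∀ s, Measurable (a s) := by
    intro s
    rw [ha]
    unfold aOf
    rcases eq_or_ne s 0 with h | h
    · simp only [if_pos h]; exact measurable_id
    · simp only [if_neg h]; exact hαmeas s (γseq s)
  have haltKmeas : ∀ s, Measurable (altKernel K a s) := fun s =>
    (hKmeas s).comp (hameas (s - 1))
  have haltKprob : ∀ s x, IsProbabilityMeasure (altKernel K a s x) := fun s x =>
    hKprob s _
  haveI : IsFiniteMeasure μ := pred_isFiniteMeasure π0 K hKmeas hKprob g t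
  haveI : IsFiniteMeasure ν :=
    pred_isFiniteMeasure π0 (altKernel K a) haltKmeas haltKprob (altG g a) t
  set f : EuclideanSpace ℝ (Fin d) → ℝ := fun x => g t (α t x γ) with hfdef
  have hfmeas : Measurable f := (hgmeas t).comp (hαmeas t γ)
  obtain ⟨B, hB⟩ := hgbdd t
  have hbdd : BddAbove (Set.range fun x => |g t x|) := by
    refine ⟨B, ?_⟩
    rintro _ ⟨x, rfl⟩
    dsimp only
    rw [abs_of_nonneg (hg0 t x)]
    exact hB x
  set C := supNorm (g t) with hC
  have hCle : ∀ y, g t y ≤ C := fun y =>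
    le_trans (le_abs_self _) (le_ciSup hbdd y)
  have hC0 : 0 ≤ C := le_trans (abs_nonneg (g t 0)) (le_ciSup hbdd 0)
  have hfC : ∀ x, f x ≤ C := fun x => hCle _
  have hf0 : ∀ x, 0 ≤ f x := fun x => hg0 t _
  have key : ∫ x, f x ∂μ ≤ ∫ x, f x ∂ν + C * tvDist μ ν :=
    integral_le_integral_add_tv μ ν f hfmeas hf0 C hC0 hfC
  have hint_f : Integrable f μ := by
    refine Integrable.mono' (integrable_const C) hfmeas.aestronglyMeasurable ?_
    exact Filter.Eventually.of_forall fun x => by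
      rw [Real.norm_eq_abs, abs_of_nonneg (hf0 x)]; exact hfC x
  have hint_g : Integrable (g t) μ := by
    refine Integrable.mono' (integrable_const C) (hgmeas t).aestronglyMeasurable ?_
    exact Filter.Eventually.of_forall fun x => by
      rw [Real.norm_eq_abs, abs_of_nonneg (hg0 t x)]; exact hCle x
  have hΔ : ∫ x, (g t (α t x γ) - g t x) ∂μ = ∫ x, f x ∂μ - ∫ x, g t x ∂μ :=
    integral_sub hint_f hint_g
  have hsel' : C * tvDist μ ν ≤ ∫ x, f x ∂μ - ∫ x, g t x ∂μ := by
    rw [← hΔ]; exact hsel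
  linarith

end Nudging
end

section
/- Let ξ_t, π_t be the predictive measures and filters of a state-space model M = (π₀, K, g), let {α_t} be parametric nudging transformations, and let ξ̄_t^α, π̄_t^α be the predictive measures and filters of the alternative nudged model M̄^α. If ξ_t(g_t) ≤ ξ̄_t^α(g_t^α), then ‖ξ_{t+1} − ξ̄_{t+1}^α‖_TV ≤ b_t ‖ξ_t − ξ̄_t^α‖_TV + a_t Δ_{g_t}(γ) + Δ_{K_{t+1}}(γ), where a_t = ‖K_{t+1}‖_{𝒟_𝒳} / ξ_t(g_t), b_t = a_t ‖g_t‖_∞, Δ_{g_t}(γ) = ∫_𝒳 [g_t(α_t(x,γ)) − g_t(x)] ξ_t(dx), and Δ_{K_{t+1}}(γ) = ∫_𝒳 ‖K_{t+1}(x,·) − K_{t+1}(α_t(x,γ),·)‖_TV π_t(dx). -/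
open MeasureTheory ENNReal

namespace Nudging

variable {X : Type*} [MeasurableSpace X]

noncomputable def Dsup (μ ν : Measure X) : ℝ≥0∞ :=
  ⨆ (F : Set X) (_ : MeasurableSet F), (μ F - ν F)

lemma tvDist_eq (μ ν : Measure X) : tvDist μ ν = (Dsup μ ν + Dsup ν μ).toReal := rfl

lemma le_Dsup {μ ν : Measure X} {F : Set X} (hF : MeasurableSet F) : μ F - ν F ≤ Dsup μ ν :=
  le_iSup₂ (f := fun (F : Set X) (_ : MeasurableSet F) => μ F - ν F) F hF

lemma Dsup_le {μ ν : Measure X} {c : ℝ≥0∞} (h : ∀ F, MeasurableSet F → μ F - ν F ≤ c) :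
    Dsup μ ν ≤ c := iSup₂_le h

lemma Dsup_le_one {μ ν : Measure X} [IsProbabilityMeasure μ] : Dsup μ ν ≤ 1 :=
  Dsup_le fun F _ => le_trans tsub_le_self prob_le_one

lemma Dsup_ne_top {μ ν : Measure X} [IsProbabilityMeasure μ] : Dsup μ ν ≠ ∞ :=
  (lt_of_le_of_lt Dsup_le_one one_lt_top).ne

lemma sub_eq_ofReal {a b : ℝ≥0∞} (ha : a ≠ ∞) (hb : b ≠ ∞) :
    a - b = ENNReal.ofReal (a.toReal - b.toReal) := by
  rcases le_total b a with h | h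
  · rw [← ENNReal.toReal_sub_of_le h ha, ENNReal.ofReal_toReal (by simp [ha, hb])]
  · rw [tsub_eq_zero_of_le h, eq_comm, ENNReal.ofReal_eq_zero]
    simp [ENNReal.toReal_mono hb h]

lemma Dsup_symm (μ ν : Measure X) [hμ : IsProbabilityMeasure μ] [hν : IsProbabilityMeasure ν] :
    Dsup μ ν = Dsup ν μ := by
  have key : ∀ (μ ν : Measure X), IsProbabilityMeasure μ → IsProbabilityMeasure ν →
      Dsup μ ν ≤ Dsup ν μ := by
    intro μ ν hμ hν
    refine Dsup_le fun F hF => ?_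
    have h1 : μ F - ν F = ν Fᶜ - μ Fᶜ := by
      rw [sub_eq_ofReal (measure_ne_top _ _) (measure_ne_top _ _),
          sub_eq_ofReal (measure_ne_top _ _) (measure_ne_top _ _)]
      congr 1
      have hμc : (μ Fᶜ).toReal = 1 - (μ F).toReal := by
        rw [prob_compl_eq_one_sub hF, ENNReal.toReal_sub_of_le prob_le_one one_ne_top,
          ENNReal.toReal_one]
      have hνc : (ν Fᶜ).toReal = 1 - (ν F).toReal := by
        rw [prob_compl_eq_one_sub hF, ENNReal.toReal_sub_of_le prob_le_one one_ne_top,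
          ENNReal.toReal_one]
      rw [hμc, hνc]; ring
    rw [h1]
    exact le_Dsup hF.compl
  exact le_antisymm (key μ ν hμ hν) (key ν μ hν hμ)

lemma tvDist_nonneg (μ ν : Measure X) : 0 ≤ tvDist μ ν := ENNReal.toReal_nonneg

lemma tvDist_eq_two_Dsup (μ ν : Measure X) [IsProbabilityMeasure μ] [IsProbabilityMeasure ν] :
    tvDist μ ν = 2 * (Dsup μ ν).toReal := by
  rw [tvDist_eq, ← Dsup_symm μ ν, ENNReal.toReal_add Dsup_ne_top Dsup_ne_top]; ring

lemma ofReal_half_tvDist (μ ν : Measure X) [IsProbabilityMeasure μ] [IsProbabilityMeasure ν] :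
    ENNReal.ofReal (tvDist μ ν / 2) = Dsup μ ν := by
  rw [tvDist_eq_two_Dsup]
  rw [show 2 * (Dsup μ ν).toReal / 2 = (Dsup μ ν).toReal by ring, ENNReal.ofReal_toReal Dsup_ne_top]

lemma lintegral_ofReal_sub_le (μ ν : Measure X) [IsProbabilityMeasure μ] [IsProbabilityMeasure ν]
    {f : X → ℝ} (hf : Measurable f) (hf0 : ∀ x, 0 ≤ f x) {M : ℝ} (hM : 0 ≤ M)
    (hfM : ∀ x, f x ≤ M) :
    (∫⁻ x, ENNReal.ofReal (f x) ∂μ) - (∫⁻ x, ENNReal.ofReal (f x) ∂ν)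
      ≤ ENNReal.ofReal M * Dsup μ ν := by
  rw [lintegral_eq_lintegral_meas_le μ (ae_of_all _ hf0) hf.aemeasurable,
      lintegral_eq_lintegral_meas_le ν (ae_of_all _ hf0) hf.aemeasurable]
  have hanti : Antitone fun t : ℝ => ν {a | t ≤ f a} := by
    intro t1 t2 h12
    exact measure_mono fun a (ha : t2 ≤ f a) => le_trans h12 ha
  refine le_trans (lintegral_sub_le _ _ hanti.measurable) ?_
  have bound : ∀ t ∈ Set.Ioi (0:ℝ), μ {a | t ≤ f a} - ν {a | t ≤ f a}
      ≤ Set.indicator (Set.Ioc 0 M) (fun _ => Dsup μ ν) t := by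
    intro t ht
    by_cases htM : t ≤ M
    · rw [Set.indicator_of_mem (Set.mem_Ioc.mpr ⟨ht, htM⟩)]
      exact le_Dsup (hf measurableSet_Ici)
    · have hempty : {a | t ≤ f a} = ∅ := by
        ext a; simp only [Set.mem_setOf_eq, Set.mem_empty_iff_false, iff_false, not_le]
        exact lt_of_le_of_lt (hfM a) (lt_of_not_ge htM)
      simp [hempty]
  refine le_trans (setLIntegral_mono' measurableSet_Ioi bound) ?_
  rw [lintegral_indicator measurableSet_Ioc]
  rw [Measure.restrict_restrict measurableSet_Ioc, setLIntegral_const]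
  have : Set.Ioc 0 M ∩ Set.Ioi 0 = Set.Ioc 0 M := by
    ext x; simp only [Set.mem_inter_iff, Set.mem_Ioc, Set.mem_Ioi, and_iff_left_iff_imp]
    exact fun h => h.1
  rw [this, Real.volume_Ioc, sub_zero, mul_comm]

lemma lintegral_ofReal_sub_le_osc [Nonempty X] (μ ν : Measure X)
    [IsProbabilityMeasure μ] [IsProbabilityMeasure ν]
    {f : X → ℝ} (hf : Measurable f) {m M : ℝ} (hm : 0 ≤ m) (hmf : ∀ x, m ≤ f x)
    (hfM : ∀ x, f x ≤ M) :
    (∫⁻ x, ENNReal.ofReal (f x) ∂μ) - (∫⁻ x, ENNReal.ofReal (f x) ∂ν)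
      ≤ ENNReal.ofReal (M - m) * Dsup μ ν := by
  have hMm : 0 ≤ M - m := by
    obtain ⟨x⟩ := ‹Nonempty X›
    have := hmf x; have := hfM x; linarith
  have h1 : ∀ x, ENNReal.ofReal (f x) = ENNReal.ofReal (f x - m) + ENNReal.ofReal m := by
    intro x
    rw [← ENNReal.ofReal_add (by have := hmf x; linarith) hm]
    congr 1; ring
  have h2 : ∀ ρ : Measure X, IsProbabilityMeasure ρ → (∫⁻ x, ENNReal.ofReal (f x) ∂ρ)
      = (∫⁻ x, ENNReal.ofReal (f x - m) ∂ρ) + ENNReal.ofReal m := by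
    intro ρ hρ
    simp_rw [h1]
    rw [lintegral_add_right _ measurable_const, lintegral_const, measure_univ, mul_one]
  rw [h2 μ ‹_›, h2 ν ‹_›]
  have h3 : (∫⁻ x, ENNReal.ofReal (f x - m) ∂μ) + ENNReal.ofReal m
      - ((∫⁻ x, ENNReal.ofReal (f x - m) ∂ν) + ENNReal.ofReal m)
      = (∫⁻ x, ENNReal.ofReal (f x - m) ∂μ) - (∫⁻ x, ENNReal.ofReal (f x - m) ∂ν) := by
    rw [show (∫⁻ x, ENNReal.ofReal (f x - m) ∂ν) + ENNReal.ofReal m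
        = ENNReal.ofReal m + (∫⁻ x, ENNReal.ofReal (f x - m) ∂ν) from add_comm _ _,
      ← tsub_tsub, ENNReal.add_sub_cancel_right ofReal_ne_top]
  rw [h3]
  exact lintegral_ofReal_sub_le μ ν (hf.sub measurable_const)
    (fun x => by have := hmf x; simp only [Pi.sub_apply]; linarith) hMm (fun x => by have := hfM x; simp only [Pi.sub_apply]; linarith)



lemma measurableSet_of_mem_algebra [MeasurableSpace.CountablyGenerated X] {s : Set X}
    (hs : s ∈ generateSetAlgebra (MeasurableSpace.countableGeneratingSet X)) :
    MeasurableSet s := by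
  refine IsSetAlgebra.generateSetAlgebra_subset (ℬ := {s : Set X | MeasurableSet s})
    (fun u hu => MeasurableSpace.measurableSet_countableGeneratingSet hu) ?_ hs
  exact ⟨MeasurableSet.empty, fun _ h => MeasurableSet.compl h,
    fun _ _ h1 h2 => MeasurableSet.union h1 h2⟩

lemma Dsup_eq_countable_sup [MeasurableSpace.CountablyGenerated X]
    (μ ν : Measure X) [IsFiniteMeasure μ] [IsFiniteMeasure ν] :
    Dsup μ ν = ⨆ t : (generateSetAlgebra (MeasurableSpace.countableGeneratingSet X) : Set (Set X)),
      (μ t - ν t) := by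
  set 𝒜 : Set (Set X) := generateSetAlgebra (MeasurableSpace.countableGeneratingSet X) with h𝒜
  have hgen : ‹MeasurableSpace X› = MeasurableSpace.generateFrom 𝒜 := by
    rw [h𝒜, generateFrom_generateSetAlgebra_eq,
      MeasurableSpace.generateFrom_countableGeneratingSet]
  have hdense : (μ + ν).MeasureDense 𝒜 :=
    Measure.MeasureDense.of_generateFrom_isSetAlgebra_finite (μ + ν) isSetAlgebra_generateSetAlgebra hgen
  refine le_antisymm ?_ (iSup_le fun t => le_Dsup (measurableSet_of_mem_algebra t.2))
  refine Dsup_le fun F hF => ?_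
  refine ENNReal.le_of_forall_pos_le_add fun ε hε _ => ?_
  obtain ⟨t, ht𝒜, hts⟩ := hdense.approx F hF (measure_ne_top _ _) ε (by exact_mod_cast hε)
  have h1 : μ F ≤ μ t + μ (symmDiff F t) := by
    refine le_trans (measure_mono ?_) (measure_union_le _ _)
    intro x hx
    by_cases hxt : x ∈ t
    · exact Or.inl hxt
    · exact Or.inr (Or.inl ⟨hx, hxt⟩)
  have h2 : ν t ≤ ν F + ν (symmDiff F t) := by
    refine le_trans (measure_mono ?_) (measure_union_le _ _)
    intro x hx
    by_cases hxF : x ∈ F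
    · exact Or.inl hxF
    · exact Or.inr (Or.inr ⟨hx, hxF⟩)
  have hsum : μ (symmDiff F t) + ν (symmDiff F t) = (μ + ν) (symmDiff F t) :=
    (Measure.add_apply μ ν _).symm
  have key : μ F - ν F ≤ (μ t - ν t) + (μ + ν) (symmDiff F t) := by
    rw [tsub_le_iff_right]
    calc μ F ≤ μ t + μ (symmDiff F t) := h1
      _ ≤ ((μ t - ν t) + ν t) + μ (symmDiff F t) := add_le_add_left le_tsub_add _
      _ ≤ ((μ t - ν t) + (ν F + ν (symmDiff F t))) + μ (symmDiff F t) :=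
          add_le_add_left (add_le_add_right h2 _) _
      _ = (μ t - ν t) + (μ (symmDiff F t) + ν (symmDiff F t)) + ν F := by ring
      _ = (μ t - ν t) + (μ + ν) (symmDiff F t) + ν F := by rw [hsum]
  refine le_trans key (add_le_add ?_ ?_)
  · exact le_iSup (fun t : 𝒜 => (μ t.1 - ν t.1)) ⟨t, ht𝒜⟩
  · exact le_trans hts.le (by simp)

lemma measurable_Dsup {Y : Type*} [MeasurableSpace Y] [MeasurableSpace.CountablyGenerated X]
    {κ η : Y → Measure X} (hκ : Measurable κ) (hη : Measurable η)
    (hκp : ∀ y, IsFiniteMeasure (κ y)) (hηp : ∀ y, IsFiniteMeasure (η y)) :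
    Measurable (fun y => Dsup (κ y) (η y)) := by
  have hrw : (fun y => Dsup (κ y) (η y)) = fun y =>
      ⨆ t : (generateSetAlgebra (MeasurableSpace.countableGeneratingSet X) : Set (Set X)),
        ((κ y) t - (η y) t) := by
    funext y
    have := hκp y; have := hηp y
    exact Dsup_eq_countable_sup (κ y) (η y)
  rw [hrw]
  have hcnt : (generateSetAlgebra (MeasurableSpace.countableGeneratingSet X)).Countable :=
    countable_generateSetAlgebra MeasurableSpace.countable_countableGeneratingSet
  have := hcnt.to_subtype
  refine Measurable.iSup fun t => Measurable.sub ?_ ?_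
  · exact (Measure.measurable_coe (measurableSet_of_mem_algebra t.2)).comp hκ
  · exact (Measure.measurable_coe (measurableSet_of_mem_algebra t.2)).comp hη

lemma measurable_tvDist {Y : Type*} [MeasurableSpace Y] [MeasurableSpace.CountablyGenerated X]
    {κ η : Y → Measure X} (hκ : Measurable κ) (hη : Measurable η)
    (hκp : ∀ y, IsFiniteMeasure (κ y)) (hηp : ∀ y, IsFiniteMeasure (η y)) :
    Measurable (fun y => tvDist (κ y) (η y)) := by
  simp_rw [tvDist_eq]
  exact ((measurable_Dsup hκ hη hκp hηp).add (measurable_Dsup hη hκ hηp hκp)).ennreal_toReal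


lemma tvDist_comm (μ ν : Measure X) : tvDist μ ν = tvDist ν μ := by
  rw [tvDist_eq, tvDist_eq, add_comm]

lemma toReal_sub_le' {a b : ℝ≥0∞} (ha : a ≠ ∞) (hb : b ≠ ∞) : a.toReal - b.toReal ≤ (a - b).toReal := by
  rcases le_total b a with h | h
  · rw [ENNReal.toReal_sub_of_le h ha]
  · have := ENNReal.toReal_mono hb h
    have h2 : a.toReal - b.toReal ≤ 0 := by linarith
    exact le_trans h2 ENNReal.toReal_nonneg

lemma tsub_triangle (a b c : ℝ≥0∞) : a - c ≤ (a - b) + (b - c) :=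
  calc a - c ≤ (a - b + b) - c := tsub_le_tsub_right le_tsub_add _
    _ ≤ (a - b) + (b - c) := add_tsub_le_assoc

lemma tvDist_le_two (μ ν : Measure X) [IsProbabilityMeasure μ] [IsProbabilityMeasure ν] :
    tvDist μ ν ≤ 2 := by
  rw [tvDist_eq_two_Dsup]
  have : (Dsup μ ν).toReal ≤ 1 := by
    have := ENNReal.toReal_mono (by simp) (Dsup_le_one (μ := μ) (ν := ν))
    simpa using this
  linarith


lemma setLintegral_ofReal_sub_le (μ ν : Measure X) [IsProbabilityMeasure μ]
    [IsProbabilityMeasure ν] {f : X → ℝ} (hf : Measurable f) (hf0 : ∀ x, 0 ≤ f x)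
    {M : ℝ} (hM : 0 ≤ M) (hfM : ∀ x, f x ≤ M) {F : Set X} (hF : MeasurableSet F) :
    (∫⁻ x in F, ENNReal.ofReal (f x) ∂μ) - (∫⁻ x in F, ENNReal.ofReal (f x) ∂ν)
      ≤ ENNReal.ofReal M * Dsup μ ν := by
  have h1 : ∀ ρ : Measure X, (∫⁻ x in F, ENNReal.ofReal (f x) ∂ρ)
      = ∫⁻ x, ENNReal.ofReal (Set.indicator F f x) ∂ρ := by
    intro ρ
    rw [← lintegral_indicator hF]
    congr 1; funext x
    by_cases hx : x ∈ F <;> simp [hx]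
  rw [h1 μ, h1 ν]
  exact lintegral_ofReal_sub_le μ ν (hf.indicator hF)
    (fun x => Set.indicator_nonneg (fun y _ => hf0 y) x) hM
    (fun x => by by_cases hx : x ∈ F
                 · simpa [hx] using hfM x
                 · simp [hx, hM])

set_option maxHeartbeats 2000000 in
lemma key_estimate {X : Type*} [MeasurableSpace X] [Nonempty X]
    [MeasurableSpace.CountablyGenerated X]
    (ξ ξb : Measure X) [IsProbabilityMeasure ξ] [IsProbabilityMeasure ξb]
    {g gb : X → ℝ} (hg : Measurable g) (hgb : Measurable gb)
    (hg0 : ∀ x, 0 ≤ g x) (hggb : ∀ x, g x ≤ gb x)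
    {Mg : ℝ} (hMg : ∀ x, gb x ≤ Mg)
    {K' Kb : X → Measure X} (hK' : Measurable K') (hKb : Measurable Kb)
    (hK'p : ∀ x, IsProbabilityMeasure (K' x)) (hKbp : ∀ x, IsProbabilityMeasure (Kb x))
    {dob : ℝ} (hdob0 : 0 ≤ dob) (hdob : ∀ x y, tvDist (Kb x) (Kb y) ≤ dob)
    (hZ : 0 < ∫ x, g x ∂ξ) (hle : ∫ x, g x ∂ξ ≤ ∫ x, gb x ∂ξb) :
    tvDist
      ((((ξ.withDensity fun x => ENNReal.ofReal (g x)) Set.univ)⁻¹ •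
          (ξ.withDensity fun x => ENNReal.ofReal (g x))).bind K')
      ((((ξb.withDensity fun x => ENNReal.ofReal (gb x)) Set.univ)⁻¹ •
          (ξb.withDensity fun x => ENNReal.ofReal (gb x))).bind Kb)
      ≤ (dob / ∫ x, g x ∂ξ) * Mg * tvDist ξ ξb
        + (dob / ∫ x, g x ∂ξ) * (∫ x, (gb x - g x) ∂ξ)
        + ∫ x, tvDist (K' x) (Kb x)
            ∂(((ξ.withDensity fun x => ENNReal.ofReal (g x)) Set.univ)⁻¹ •
               (ξ.withDensity fun x => ENNReal.ofReal (g x))) := by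
  classical
  set G : X → ℝ≥0∞ := fun x => ENNReal.ofReal (g x) with hG
  set Gb : X → ℝ≥0∞ := fun x => ENNReal.ofReal (gb x) with hGb
  set ν : Measure X := ξ.withDensity G with hν
  set νb : Measure X := ξb.withDensity Gb with hνb
  set Ze : ℝ≥0∞ := ν Set.univ with hZe
  set Zbe : ℝ≥0∞ := νb Set.univ with hZbe
  set π : Measure X := Ze⁻¹ • ν with hπ
  set πb : Measure X := Zbe⁻¹ • νb with hπb
  -- nonnegativity and bounds on g, gb
  have hgb0 : ∀ x, 0 ≤ gb x := fun x => le_trans (hg0 x) (hggb x)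
  have hMg0 : 0 ≤ Mg := le_trans (hgb0 (Classical.arbitrary X)) (hMg _)
  -- lintegral identifications
  have hZeq : Ze = ∫⁻ x, G x ∂ξ := by
    rw [hZe, hν, withDensity_apply _ MeasurableSet.univ, Measure.restrict_univ]
  have hZbeq : Zbe = ∫⁻ x, Gb x ∂ξb := by
    rw [hZbe, hνb, withDensity_apply _ MeasurableSet.univ, Measure.restrict_univ]
  have hGmeas : Measurable G := hg.ennreal_ofReal
  have hGbmeas : Measurable Gb := hgb.ennreal_ofReal
  have hZr : ∫ x, g x ∂ξ = Ze.toReal := by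
    rw [hZeq, integral_eq_lintegral_of_nonneg_ae (ae_of_all _ hg0) hg.aestronglyMeasurable]
  have hZbr : ∫ x, gb x ∂ξb = Zbe.toReal := by
    rw [hZbeq, integral_eq_lintegral_of_nonneg_ae (ae_of_all _ hgb0) hgb.aestronglyMeasurable]
  have hZe_le : Ze ≤ ENNReal.ofReal Mg := by
    rw [hZeq]
    calc ∫⁻ x, G x ∂ξ ≤ ∫⁻ _, ENNReal.ofReal Mg ∂ξ :=
          lintegral_mono fun x => ENNReal.ofReal_le_ofReal (le_trans (hggb x) (hMg x))
      _ = ENNReal.ofReal Mg := by rw [lintegral_const, measure_univ, mul_one]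
  have hZbe_le : Zbe ≤ ENNReal.ofReal Mg := by
    rw [hZbeq]
    calc ∫⁻ x, Gb x ∂ξb ≤ ∫⁻ _, ENNReal.ofReal Mg ∂ξb :=
          lintegral_mono fun x => ENNReal.ofReal_le_ofReal (hMg x)
      _ = ENNReal.ofReal Mg := by rw [lintegral_const, measure_univ, mul_one]
  have hZe_fin : Ze ≠ ∞ := (lt_of_le_of_lt hZe_le ofReal_lt_top).ne
  have hZbe_fin : Zbe ≠ ∞ := (lt_of_le_of_lt hZbe_le ofReal_lt_top).ne
  have hZe_pos : 0 < Ze := by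
    rcases eq_or_ne Ze 0 with h0 | h0
    · rw [hZr, h0] at hZ; simp at hZ
    · exact pos_iff_ne_zero.2 h0
  have hZbe_pos : 0 < Zbe := by
    rcases eq_or_ne Zbe 0 with h0 | h0
    · exfalso
      rw [hZbr, h0] at hle
      simp only [ENNReal.toReal_zero] at hle
      linarith
    · exact pos_iff_ne_zero.2 h0
  have hZrpos : 0 < Ze.toReal := ENNReal.toReal_pos hZe_pos.ne' hZe_fin
  have hZbrpos : 0 < Zbe.toReal := ENNReal.toReal_pos hZbe_pos.ne' hZbe_fin
  have hZZb : Ze.toReal ≤ Zbe.toReal := by rw [← hZr, ← hZbr]; exact hle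
  haveI hπ_prob : IsProbabilityMeasure π := by
    constructor
    rw [hπ, Measure.smul_apply, smul_eq_mul, ← hZe]
    exact ENNReal.inv_mul_cancel hZe_pos.ne' hZe_fin
  haveI hπb_prob : IsProbabilityMeasure πb := by
    constructor
    rw [hπb, Measure.smul_apply, smul_eq_mul, ← hZbe]
    exact ENNReal.inv_mul_cancel hZbe_pos.ne' hZbe_fin
  -- the Delta quantity
  set Δe : ℝ≥0∞ := ∫⁻ x, (Gb x - G x) ∂ξ with hΔe
  have hΔe_eq : Δe = (∫⁻ x, Gb x ∂ξ) - (∫⁻ x, G x ∂ξ) := by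
    rw [hΔe]
    rw [lintegral_sub hGmeas (by rw [← hZeq]; exact hZe_fin)
      (ae_of_all _ fun x => ENNReal.ofReal_le_ofReal (hggb x))]
  have hGbint_le : (∫⁻ x, Gb x ∂ξ) ≤ ENNReal.ofReal Mg := by
    calc ∫⁻ x, Gb x ∂ξ ≤ ∫⁻ _, ENNReal.ofReal Mg ∂ξ :=
          lintegral_mono fun x => ENNReal.ofReal_le_ofReal (hMg x)
      _ = ENNReal.ofReal Mg := by rw [lintegral_const, measure_univ, mul_one]
  have hGbint_fin : (∫⁻ x, Gb x ∂ξ) ≠ ∞ := (lt_of_le_of_lt hGbint_le ofReal_lt_top).ne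
  have hΔe_fin : Δe ≠ ∞ := by
    rw [hΔe_eq]
    exact (lt_of_le_of_lt tsub_le_self (lt_top_iff_ne_top.2 hGbint_fin)).ne
  have hΔr : ∫ x, (gb x - g x) ∂ξ = Δe.toReal := by
    rw [hΔe]
    rw [integral_eq_lintegral_of_nonneg_ae (ae_of_all _ fun x => sub_nonneg.2 (hggb x))
      ((hgb.sub hg).aestronglyMeasurable)]
    congr 1
    refine lintegral_congr fun x => ?_
    simp only [hG, hGb]
    exact ENNReal.ofReal_sub _ (hg0 x)
  have hΔ0 : 0 ≤ ∫ x, (gb x - g x) ∂ξ := by rw [hΔr]; exact ENNReal.toReal_nonneg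
  -- real abbreviations
  have hDsym : Dsup ξ ξb = Dsup ξb ξ := Dsup_symm ξ ξb
  have hDfin : Dsup ξ ξb ≠ ∞ := Dsup_ne_top
  have hDbfin : Dsup ξb ξ ≠ ∞ := Dsup_ne_top
  have hDr0 : 0 ≤ (Dsup ξ ξb).toReal := ENNReal.toReal_nonneg
  have hDrb0 : 0 ≤ (Dsup ξb ξ).toReal := ENNReal.toReal_nonneg
  have hνF : ∀ F : Set X, MeasurableSet F → ν F = ∫⁻ x in F, G x ∂ξ := fun F hF =>
    withDensity_apply _ hF
  have hνbF : ∀ F : Set X, MeasurableSet F → νb F = ∫⁻ x in F, Gb x ∂ξb := fun F hF =>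
    withDensity_apply _ hF
  have hA_le : ∀ F : Set X, ν F ≤ Ze := fun F => measure_mono (Set.subset_univ F)
  have hB_le : ∀ F : Set X, νb F ≤ Zbe := fun F => measure_mono (Set.subset_univ F)
  have hνfin : ∀ F : Set X, ν F ≠ ∞ := fun F => (lt_of_le_of_lt (hA_le F)
    (lt_top_iff_ne_top.2 hZe_fin)).ne
  have hνbfin : ∀ F : Set X, νb F ≠ ∞ := fun F => (lt_of_le_of_lt (hB_le F)
    (lt_top_iff_ne_top.2 hZbe_fin)).ne
  have hπF : ∀ F : Set X, (π F).toReal = (ν F).toReal / Ze.toReal := by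
    intro F
    rw [hπ, Measure.smul_apply, smul_eq_mul, ENNReal.toReal_mul, ENNReal.toReal_inv]
    ring
  have hπbF : ∀ F : Set X, (πb F).toReal = (νb F).toReal / Zbe.toReal := by
    intro F
    rw [hπb, Measure.smul_apply, smul_eq_mul, ENNReal.toReal_mul, ENNReal.toReal_inv]
    ring
  -- Zb - Z bound
  have hGbXi_toReal : (∫⁻ x, Gb x ∂ξ).toReal = Ze.toReal + Δe.toReal := by
    have h : (∫⁻ x, Gb x ∂ξ) = Ze + Δe := by
      rw [hΔe_eq, hZeq, add_comm]
      rw [tsub_add_cancel_of_le (lintegral_mono fun x =>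
        ENNReal.ofReal_le_ofReal (hggb x))]
    rw [h, ENNReal.toReal_add hZe_fin hΔe_fin]
  have hZbZ : Zbe.toReal - Ze.toReal ≤ Mg * (Dsup ξb ξ).toReal + Δe.toReal := by
    have s1 : Zbe.toReal - (∫⁻ x, Gb x ∂ξ).toReal ≤ Mg * (Dsup ξb ξ).toReal := by
      have h := lintegral_ofReal_sub_le ξb ξ hgb hgb0 hMg0 hMg
      calc Zbe.toReal - (∫⁻ x, Gb x ∂ξ).toReal
          ≤ ((∫⁻ x, Gb x ∂ξb) - (∫⁻ x, Gb x ∂ξ)).toReal := by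
            rw [hZbeq]; exact toReal_sub_le' (by rw [← hZbeq]; exact hZbe_fin) hGbint_fin
        _ ≤ (ENNReal.ofReal Mg * Dsup ξb ξ).toReal :=
            ENNReal.toReal_mono (ENNReal.mul_ne_top ofReal_ne_top hDbfin) h
        _ = Mg * (Dsup ξb ξ).toReal := by
            rw [ENNReal.toReal_mul, ENNReal.toReal_ofReal hMg0]
    linarith [hGbXi_toReal]
  -- E1
  have hE1 : Dsup π πb ≤ ENNReal.ofReal
      ((Mg * ((Dsup ξ ξb).toReal + (Dsup ξb ξ).toReal) + Δe.toReal) / Ze.toReal) := by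
    refine Dsup_le fun F hF => ?_
    rw [sub_eq_ofReal (measure_ne_top _ _) (measure_ne_top _ _)]
    refine ENNReal.ofReal_le_ofReal ?_
    rw [hπF F, hπbF F]
    have hAr0 : 0 ≤ (ν F).toReal := ENNReal.toReal_nonneg
    have hBr0 : 0 ≤ (νb F).toReal := ENNReal.toReal_nonneg
    have hArZ : (ν F).toReal ≤ Ze.toReal := ENNReal.toReal_mono hZe_fin (hA_le F)
    have hBrZ : (νb F).toReal ≤ Zbe.toReal := ENNReal.toReal_mono hZbe_fin (hB_le F)
    have hGbF_fin : (∫⁻ x in F, Gb x ∂ξ) ≠ ∞ :=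
      (lt_of_le_of_lt (setLIntegral_le_lintegral _ _)
        (lt_top_iff_ne_top.2 hGbint_fin)).ne
    have step1 : (ν F).toReal ≤ (∫⁻ x in F, Gb x ∂ξ).toReal := by
      rw [hνF F hF]
      exact ENNReal.toReal_mono hGbF_fin
        (lintegral_mono fun x => ENNReal.ofReal_le_ofReal (hggb x))
    have step2 : (∫⁻ x in F, Gb x ∂ξ).toReal - (νb F).toReal
        ≤ Mg * (Dsup ξ ξb).toReal := by
      rw [hνbF F hF]
      have h := setLintegral_ofReal_sub_le ξ ξb hgb hgb0 hMg0 hMg hF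
      calc (∫⁻ x in F, Gb x ∂ξ).toReal - (∫⁻ x in F, Gb x ∂ξb).toReal
          ≤ ((∫⁻ x in F, Gb x ∂ξ) - (∫⁻ x in F, Gb x ∂ξb)).toReal :=
            toReal_sub_le' hGbF_fin (by rw [← hνbF F hF]; exact hνbfin F)
        _ ≤ (ENNReal.ofReal Mg * Dsup ξ ξb).toReal :=
            ENNReal.toReal_mono (ENNReal.mul_ne_top ofReal_ne_top hDfin) h
        _ = Mg * (Dsup ξ ξb).toReal := by
            rw [ENNReal.toReal_mul, ENNReal.toReal_ofReal hMg0]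
    have hsub : (ν F).toReal - (νb F).toReal ≤ Mg * (Dsup ξ ξb).toReal := by linarith
    have hZZb' : 0 < Zbe.toReal := hZbrpos
    rw [div_sub_div _ _ hZrpos.ne' hZbrpos.ne', div_le_div_iff₀ (by positivity) hZrpos]
    have hA : ((ν F).toReal - (νb F).toReal) * Zbe.toReal * Ze.toReal
        ≤ Mg * (Dsup ξ ξb).toReal * (Zbe.toReal * Ze.toReal) := by
      have := mul_le_mul_of_nonneg_right
        (mul_le_mul_of_nonneg_right hsub (le_of_lt hZbrpos)) (le_of_lt hZrpos)
      nlinarith [this]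
    have hB : ((νb F).toReal * (Zbe.toReal - Ze.toReal)) * Ze.toReal
        ≤ (Zbe.toReal * (Mg * (Dsup ξb ξ).toReal + Δe.toReal)) * Ze.toReal := by
      have b1 : (νb F).toReal * (Zbe.toReal - Ze.toReal)
          ≤ Zbe.toReal * (Zbe.toReal - Ze.toReal) :=
        mul_le_mul_of_nonneg_right hBrZ (sub_nonneg.2 hZZb)
      have b2 : Zbe.toReal * (Zbe.toReal - Ze.toReal)
          ≤ Zbe.toReal * (Mg * (Dsup ξb ξ).toReal + Δe.toReal) :=
        mul_le_mul_of_nonneg_left hZbZ (le_of_lt hZbrpos)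
      exact mul_le_mul_of_nonneg_right (le_trans b1 b2) (le_of_lt hZrpos)
    nlinarith [hA, hB]
  -- E2
  have hE2 : Dsup πb π ≤ ENNReal.ofReal
      ((Mg * (Dsup ξb ξ).toReal + Δe.toReal) / Ze.toReal) := by
    refine Dsup_le fun F hF => ?_
    rw [sub_eq_ofReal (measure_ne_top _ _) (measure_ne_top _ _)]
    refine ENNReal.ofReal_le_ofReal ?_
    rw [hπF F, hπbF F]
    have hAr0 : 0 ≤ (ν F).toReal := ENNReal.toReal_nonneg
    have hBr0 : 0 ≤ (νb F).toReal := ENNReal.toReal_nonneg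
    have hGbF_fin : (∫⁻ x in F, Gb x ∂ξ) ≠ ∞ :=
      (lt_of_le_of_lt (setLIntegral_le_lintegral _ _)
        (lt_top_iff_ne_top.2 hGbint_fin)).ne
    have u1 : (νb F).toReal - (∫⁻ x in F, Gb x ∂ξ).toReal
        ≤ Mg * (Dsup ξb ξ).toReal := by
      rw [hνbF F hF]
      have h := setLintegral_ofReal_sub_le ξb ξ hgb hgb0 hMg0 hMg hF
      calc (∫⁻ x in F, Gb x ∂ξb).toReal - (∫⁻ x in F, Gb x ∂ξ).toReal
          ≤ ((∫⁻ x in F, Gb x ∂ξb) - (∫⁻ x in F, Gb x ∂ξ)).toReal :=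
            toReal_sub_le' (by rw [← hνbF F hF]; exact hνbfin F) hGbF_fin
        _ ≤ (ENNReal.ofReal Mg * Dsup ξb ξ).toReal :=
            ENNReal.toReal_mono (ENNReal.mul_ne_top ofReal_ne_top hDbfin) h
        _ = Mg * (Dsup ξb ξ).toReal := by
            rw [ENNReal.toReal_mul, ENNReal.toReal_ofReal hMg0]
    have u2 : (∫⁻ x in F, Gb x ∂ξ).toReal - (ν F).toReal ≤ Δe.toReal := by
      have h : (∫⁻ x in F, Gb x ∂ξ) ≤ ν F + Δe := by
        rw [hνF F hF]
        calc ∫⁻ x in F, Gb x ∂ξ ≤ ∫⁻ x in F, (G x + (Gb x - G x)) ∂ξ :=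
              lintegral_mono fun x => le_add_tsub
          _ = (∫⁻ x in F, G x ∂ξ) + ∫⁻ x in F, (Gb x - G x) ∂ξ :=
              lintegral_add_left hGmeas _
          _ ≤ (∫⁻ x in F, G x ∂ξ) + Δe := by
              refine add_le_add_right ?_ _
              rw [hΔe]
              exact setLIntegral_le_lintegral _ _
      have h2 := ENNReal.toReal_mono (by
          exact ENNReal.add_ne_top.2 ⟨hνfin F, hΔe_fin⟩) h
      rw [ENNReal.toReal_add (hνfin F) hΔe_fin] at h2
      linarith
    have hBA : (νb F).toReal - (ν F).toReal
        ≤ Mg * (Dsup ξb ξ).toReal + Δe.toReal := by linarith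
    have hdiv : (νb F).toReal / Zbe.toReal ≤ (νb F).toReal / Ze.toReal :=
      div_le_div_of_nonneg_left hBr0 hZrpos hZZb
    calc (νb F).toReal / Zbe.toReal - (ν F).toReal / Ze.toReal
        ≤ (νb F).toReal / Ze.toReal - (ν F).toReal / Ze.toReal := by linarith
      _ = ((νb F).toReal - (ν F).toReal) / Ze.toReal := by ring
      _ ≤ (Mg * (Dsup ξb ξ).toReal + Δe.toReal) / Ze.toReal :=
          div_le_div_of_nonneg_right hBA (le_of_lt hZrpos)
  -- probability of the binds
  haveI hbind1 : IsProbabilityMeasure (π.bind K') := by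
    constructor
    rw [Measure.bind_apply MeasurableSet.univ hK'.aemeasurable]
    rw [lintegral_congr fun x => (hK'p x).measure_univ, lintegral_one, measure_univ]
  haveI hbind2 : IsProbabilityMeasure (πb.bind Kb) := by
    constructor
    rw [Measure.bind_apply MeasurableSet.univ hKb.aemeasurable]
    rw [lintegral_congr fun x => (hKbp x).measure_univ, lintegral_one, measure_univ]
  -- the kernel distance function
  set tvd : X → ℝ := fun x => tvDist (K' x) (Kb x) with htvd
  have htvd0 : ∀ x, 0 ≤ tvd x := fun x => tvDist_nonneg _ _
  have htvd2 : ∀ x, tvd x ≤ 2 := fun x => by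
    haveI := hK'p x; haveI := hKbp x
    exact tvDist_le_two _ _
  have htvd_meas : Measurable tvd := by
    refine measurable_tvDist hK' hKb (fun x => ?_) (fun x => ?_)
    · haveI := hK'p x; infer_instance
    · haveI := hKbp x; infer_instance
  set Ihalf : ℝ≥0∞ := ∫⁻ x, ENNReal.ofReal (tvd x / 2) ∂π with hIhalf
  have hIhalf_le : Ihalf ≤ 1 := by
    rw [hIhalf]
    calc ∫⁻ x, ENNReal.ofReal (tvd x / 2) ∂π ≤ ∫⁻ _, 1 ∂π :=
          lintegral_mono fun x => by
            rw [show (1 : ℝ≥0∞) = ENNReal.ofReal 1 by simp]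
            exact ENNReal.ofReal_le_ofReal (by linarith [htvd2 x])
      _ = 1 := by rw [lintegral_one, measure_univ]
  have hIhalf_fin : Ihalf ≠ ∞ := (lt_of_le_of_lt hIhalf_le one_lt_top).ne
  -- one-sided bounds for the binds
  have hbr1 : Dsup (π.bind K') (πb.bind Kb)
      ≤ Ihalf + ENNReal.ofReal (dob / 2) * Dsup π πb := by
    refine Dsup_le fun F hF => ?_
    rw [Measure.bind_apply hF hK'.aemeasurable, Measure.bind_apply hF hKb.aemeasurable]
    refine le_trans (tsub_triangle _ (∫⁻ x, Kb x F ∂π) _) (add_le_add ?_ ?_)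
    · refine le_trans (lintegral_sub_le _ _ ((Measure.measurable_coe hF).comp hKb)) ?_
      rw [hIhalf]
      refine lintegral_mono fun x => ?_
      haveI := hK'p x; haveI := hKbp x
      simp only [htvd]
      rw [ofReal_half_tvDist (K' x) (Kb x)]
      exact le_Dsup hF
    · -- oscillation step
      have hf_meas : Measurable (fun x => (Kb x F).toReal) :=
        ((Measure.measurable_coe hF).comp hKb).ennreal_toReal
      have hf01 : ∀ x, (Kb x F).toReal ≤ 1 := fun x => by
        haveI := hKbp x
        simpa using ENNReal.toReal_mono one_ne_top prob_le_one
      have hbdda : BddAbove (Set.range fun x => (Kb x F).toReal) :=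
        ⟨1, by rintro _ ⟨x, rfl⟩; exact hf01 x⟩
      have hbddb : BddBelow (Set.range fun x => (Kb x F).toReal) :=
        ⟨0, by rintro _ ⟨x, rfl⟩; exact ENNReal.toReal_nonneg⟩
      have hm0 : 0 ≤ ⨅ x, (Kb x F).toReal := le_ciInf fun x => ENNReal.toReal_nonneg
      have hmf : ∀ x, (⨅ y, (Kb y F).toReal) ≤ (Kb x F).toReal := fun x => ciInf_le hbddb x
      have hfM : ∀ x, (Kb x F).toReal ≤ ⨆ y, (Kb y F).toReal := fun x => le_ciSup hbdda x
      have hMm : (⨆ y, (Kb y F).toReal) - (⨅ y, (Kb y F).toReal) ≤ dob / 2 := by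
        rw [sub_le_iff_le_add]
        refine ciSup_le fun x => ?_
        have hxm : (Kb x F).toReal - dob / 2 ≤ ⨅ y, (Kb y F).toReal := by
          refine le_ciInf fun y => ?_
          haveI := hKbp x; haveI := hKbp y
          have h1 : (Kb x F).toReal - (Kb y F).toReal ≤ (Dsup (Kb x) (Kb y)).toReal :=
            le_trans (toReal_sub_le' (measure_ne_top _ _) (measure_ne_top _ _))
              (ENNReal.toReal_mono Dsup_ne_top (le_Dsup hF))
          have h2 : (Dsup (Kb x) (Kb y)).toReal = tvDist (Kb x) (Kb y) / 2 := by
            rw [tvDist_eq_two_Dsup]; ring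
          have h3 := hdob x y
          linarith
        linarith
      have hrwf : ∀ ρ : Measure X, ∫⁻ x, Kb x F ∂ρ
          = ∫⁻ x, ENNReal.ofReal ((Kb x F).toReal) ∂ρ := by
        intro ρ; refine lintegral_congr fun x => ?_
        rw [ENNReal.ofReal_toReal (measure_ne_top _ _)]
      rw [hrwf π, hrwf πb]
      refine le_trans (lintegral_ofReal_sub_le_osc π πb hf_meas hm0 hmf hfM) ?_
      exact mul_le_mul_left (ENNReal.ofReal_le_ofReal hMm) _
  have hbr2 : Dsup (πb.bind Kb) (π.bind K')
      ≤ Ihalf + ENNReal.ofReal (dob / 2) * Dsup πb π := by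
    refine Dsup_le fun F hF => ?_
    rw [Measure.bind_apply hF hK'.aemeasurable, Measure.bind_apply hF hKb.aemeasurable]
    rw [add_comm Ihalf]
    refine le_trans (tsub_triangle _ (∫⁻ x, Kb x F ∂π) _) (add_le_add ?_ ?_)
    · -- oscillation step (reverse direction)
      have hf_meas : Measurable (fun x => (Kb x F).toReal) :=
        ((Measure.measurable_coe hF).comp hKb).ennreal_toReal
      have hf01 : ∀ x, (Kb x F).toReal ≤ 1 := fun x => by
        haveI := hKbp x
        simpa using ENNReal.toReal_mono one_ne_top prob_le_one
      have hbdda : BddAbove (Set.range fun x => (Kb x F).toReal) :=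
        ⟨1, by rintro _ ⟨x, rfl⟩; exact hf01 x⟩
      have hbddb : BddBelow (Set.range fun x => (Kb x F).toReal) :=
        ⟨0, by rintro _ ⟨x, rfl⟩; exact ENNReal.toReal_nonneg⟩
      have hm0 : 0 ≤ ⨅ x, (Kb x F).toReal := le_ciInf fun x => ENNReal.toReal_nonneg
      have hmf : ∀ x, (⨅ y, (Kb y F).toReal) ≤ (Kb x F).toReal := fun x => ciInf_le hbddb x
      have hfM : ∀ x, (Kb x F).toReal ≤ ⨆ y, (Kb y F).toReal := fun x => le_ciSup hbdda x
      have hMm : (⨆ y, (Kb y F).toReal) - (⨅ y, (Kb y F).toReal) ≤ dob / 2 := by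
        rw [sub_le_iff_le_add]
        refine ciSup_le fun x => ?_
        have hxm : (Kb x F).toReal - dob / 2 ≤ ⨅ y, (Kb y F).toReal := by
          refine le_ciInf fun y => ?_
          haveI := hKbp x; haveI := hKbp y
          have h1 : (Kb x F).toReal - (Kb y F).toReal ≤ (Dsup (Kb x) (Kb y)).toReal :=
            le_trans (toReal_sub_le' (measure_ne_top _ _) (measure_ne_top _ _))
              (ENNReal.toReal_mono Dsup_ne_top (le_Dsup hF))
          have h2 : (Dsup (Kb x) (Kb y)).toReal = tvDist (Kb x) (Kb y) / 2 := by
            rw [tvDist_eq_two_Dsup]; ring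
          have h3 := hdob x y
          linarith
        linarith
      have hrwf : ∀ ρ : Measure X, ∫⁻ x, Kb x F ∂ρ
          = ∫⁻ x, ENNReal.ofReal ((Kb x F).toReal) ∂ρ := by
        intro ρ; refine lintegral_congr fun x => ?_
        rw [ENNReal.ofReal_toReal (measure_ne_top _ _)]
      rw [hrwf πb, hrwf π]
      refine le_trans (lintegral_ofReal_sub_le_osc πb π hf_meas hm0 hmf hfM) ?_
      exact mul_le_mul_left (ENNReal.ofReal_le_ofReal hMm) _
    · refine le_trans (lintegral_sub_le _ _ ((Measure.measurable_coe hF).comp hK')) ?_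
      rw [hIhalf]
      refine lintegral_mono fun x => ?_
      haveI := hK'p x; haveI := hKbp x
      simp only [htvd]
      rw [tvDist_comm (K' x) (Kb x), ofReal_half_tvDist (Kb x) (K' x)]
      exact le_Dsup hF
  -- identify the Bochner integral of tvd with Ihalf
  have hIint : ∫ x, tvd x ∂π = 2 * Ihalf.toReal := by
    rw [integral_eq_lintegral_of_nonneg_ae (ae_of_all _ htvd0) htvd_meas.aestronglyMeasurable]
    have h2I : ∫⁻ x, ENNReal.ofReal (tvd x) ∂π = 2 * Ihalf := by
      rw [hIhalf, ← lintegral_const_mul' 2 _ (by norm_num : (2:ℝ≥0∞) ≠ ∞)]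
      refine lintegral_congr fun x => ?_
      rw [show (2:ℝ≥0∞) = ENNReal.ofReal 2 by norm_num,
        ← ENNReal.ofReal_mul (by norm_num : (0:ℝ) ≤ 2)]
      congr 1; ring
    rw [h2I, ENNReal.toReal_mul]
    norm_num
  -- real bounds on the filter distance
  have hR1_0 : 0 ≤ (Mg * ((Dsup ξ ξb).toReal + (Dsup ξb ξ).toReal) + Δe.toReal) / Ze.toReal :=
    div_nonneg (add_nonneg (mul_nonneg hMg0 (add_nonneg hDr0 hDrb0)) ENNReal.toReal_nonneg)
      hZrpos.le
  have hR2_0 : 0 ≤ (Mg * (Dsup ξb ξ).toReal + Δe.toReal) / Ze.toReal :=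
    div_nonneg (add_nonneg (mul_nonneg hMg0 hDrb0) ENNReal.toReal_nonneg) hZrpos.le
  have hd1 : (Dsup π πb).toReal
      ≤ (Mg * ((Dsup ξ ξb).toReal + (Dsup ξb ξ).toReal) + Δe.toReal) / Ze.toReal := by
    refine le_trans (ENNReal.toReal_mono ofReal_ne_top hE1) ?_
    rw [ENNReal.toReal_ofReal hR1_0]
  have hd2 : (Dsup πb π).toReal ≤ (Mg * (Dsup ξb ξ).toReal + Δe.toReal) / Ze.toReal := by
    refine le_trans (ENNReal.toReal_mono ofReal_ne_top hE2) ?_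
    rw [ENNReal.toReal_ofReal hR2_0]
  have hdob2 : 0 ≤ dob / 2 := div_nonneg hdob0 (by norm_num)
  -- main toReal bound
  have hfin1 : Ihalf + ENNReal.ofReal (dob / 2) * Dsup π πb ≠ ∞ :=
    ENNReal.add_ne_top.2 ⟨hIhalf_fin, ENNReal.mul_ne_top ofReal_ne_top Dsup_ne_top⟩
  have hfin2 : Ihalf + ENNReal.ofReal (dob / 2) * Dsup πb π ≠ ∞ :=
    ENNReal.add_ne_top.2 ⟨hIhalf_fin, ENNReal.mul_ne_top ofReal_ne_top Dsup_ne_top⟩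
  have hLHS : tvDist (π.bind K') (πb.bind Kb)
      ≤ 2 * Ihalf.toReal + (dob / 2) * ((Dsup π πb).toReal + (Dsup πb π).toReal) := by
    rw [tvDist_eq]
    refine le_trans (ENNReal.toReal_mono (ENNReal.add_ne_top.2 ⟨hfin1, hfin2⟩)
      (add_le_add hbr1 hbr2)) ?_
    rw [ENNReal.toReal_add hfin1 hfin2,
      ENNReal.toReal_add hIhalf_fin (ENNReal.mul_ne_top ofReal_ne_top Dsup_ne_top),
      ENNReal.toReal_add hIhalf_fin (ENNReal.mul_ne_top ofReal_ne_top Dsup_ne_top),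
      ENNReal.toReal_mul, ENNReal.toReal_mul, ENNReal.toReal_ofReal hdob2]
    ring_nf
    exact le_refl _
  -- finish
  rw [hZr, hΔr]
  have hgoal_tv : tvDist ξ ξb = (Dsup ξ ξb).toReal + (Dsup ξb ξ).toReal := by
    rw [tvDist_eq, ENNReal.toReal_add hDfin hDbfin]
  rw [hgoal_tv]
  have hIπ : ∫ x, tvd x ∂π = 2 * Ihalf.toReal := hIint
  refine le_trans hLHS ?_
  rw [show ∫ x, tvd x ∂π = 2 * Ihalf.toReal from hIint]
  have hDrEq : (Dsup ξ ξb).toReal = (Dsup ξb ξ).toReal := by rw [hDsym]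
  have hsum : (Dsup π πb).toReal + (Dsup πb π).toReal
      ≤ (3 * (Mg * (Dsup ξb ξ).toReal) + 2 * Δe.toReal) / Ze.toReal := by
    have e1 : (Mg * ((Dsup ξ ξb).toReal + (Dsup ξb ξ).toReal) + Δe.toReal) / Ze.toReal
        + (Mg * (Dsup ξb ξ).toReal + Δe.toReal) / Ze.toReal
        = (3 * (Mg * (Dsup ξb ξ).toReal) + 2 * Δe.toReal) / Ze.toReal := by
      rw [hDrEq, ← add_div]
      congr 1; ring
    linarith [hd1, hd2, e1]
  have hkey : dob / 2 * ((Dsup π πb).toReal + (Dsup πb π).toReal)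
      ≤ dob / Ze.toReal * Mg * ((Dsup ξ ξb).toReal + (Dsup ξb ξ).toReal)
        + dob / Ze.toReal * Δe.toReal := by
    have h1 : dob / 2 * ((Dsup π πb).toReal + (Dsup πb π).toReal)
        ≤ dob / 2 * ((3 * (Mg * (Dsup ξb ξ).toReal) + 2 * Δe.toReal) / Ze.toReal) :=
      mul_le_mul_of_nonneg_left hsum hdob2
    refine le_trans h1 ?_
    rw [hDrEq]
    have hMB : 0 ≤ dob * (Mg * (Dsup ξb ξ).toReal) :=
      mul_nonneg hdob0 (mul_nonneg hMg0 hDrb0)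
    have hZne : Ze.toReal ≠ 0 := hZrpos.ne'
    field_simp
    ring_nf
    nlinarith [mul_pos hZrpos hZrpos, mul_nonneg hMB (le_of_lt (mul_pos hZrpos hZrpos))]
  linarith [hkey]

lemma pred_succ_def (π0 : Measure X) (K : ℕ → X → Measure X) (g : ℕ → X → ℝ) (s : ℕ) :
    pred π0 K g (s+1) = (filt π0 K g s).bind (K (s+1)) := rfl

lemma filt_succ_def (π0 : Measure X) (K : ℕ → X → Measure X) (g : ℕ → X → ℝ) (s : ℕ) :
    filt π0 K g (s+1) =
      ((((filt π0 K g s).bind (K (s+1))).withDensity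
          fun x => ENNReal.ofReal (g (s+1) x)) Set.univ)⁻¹ •
        (((filt π0 K g s).bind (K (s+1))).withDensity
          fun x => ENNReal.ofReal (g (s+1) x)) := rfl

lemma filt_prob_or_zero (π0 : Measure X) (K : ℕ → X → Measure X) (g : ℕ → X → ℝ)
    (hπ0 : IsProbabilityMeasure π0) (s : ℕ) :
    IsProbabilityMeasure (filt π0 K g s) ∨ filt π0 K g s = 0 := by
  cases s with
  | zero => exact Or.inl hπ0
  | succ n =>
    rw [filt_succ_def]
    set νn : Measure X := ((filt π0 K g n).bind (K (n+1))).withDensity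
      (fun x => ENNReal.ofReal (g (n+1) x)) with hνn
    rcases eq_or_ne (νn Set.univ) 0 with h0 | h0
    · right
      have hz : νn = 0 := Measure.measure_univ_eq_zero.1 h0
      rw [hz]; simp
    · rcases eq_or_ne (νn Set.univ) ∞ with hT | hT
      · right; rw [hT]; simp
      · left
        constructor
        rw [Measure.smul_apply, smul_eq_mul]
        exact ENNReal.inv_mul_cancel h0 hT

lemma isProbabilityMeasure_bind {μ : Measure X} (hμ : IsProbabilityMeasure μ)
    {κ : X → Measure X} (hκ : Measurable κ) (hκp : ∀ x, IsProbabilityMeasure (κ x)) :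
    IsProbabilityMeasure (μ.bind κ) := by
  constructor
  rw [Measure.bind_apply MeasurableSet.univ hκ.aemeasurable]
  rw [lintegral_congr fun x => (hκp x).measure_univ, lintegral_one, measure_univ]


/-- **Lemma (one-step recursion for the predictive error).**
If `ξ_t(g_t) ≤ ξ̄_t^α(g_t^α)`, then
`‖ξ_{t+1} - ξ̄_{t+1}^α‖_TV ≤ b_t ‖ξ_t - ξ̄_t^α‖_TV + a_t Δ_{g_t}(γ) + Δ_{K_{t+1}}(γ)`,
where `a_t = ‖K_{t+1}‖_{𝒟_𝒳}/ξ_t(g_t)` and `b_t = a_t ‖g_t‖_∞`. -/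
theorem predictive_error_recursion
    {d : ℕ}
    (π0 : Measure (EuclideanSpace ℝ (Fin d))) (hπ0 : IsProbabilityMeasure π0)
    (K : ℕ → EuclideanSpace ℝ (Fin d) → Measure (EuclideanSpace ℝ (Fin d)))
    (hKmeas : ∀ t', Measurable (K t'))
    (hKprob : ∀ t' x, IsProbabilityMeasure (K t' x))
    (g : ℕ → EuclideanSpace ℝ (Fin d) → ℝ)
    (hg0 : ∀ t' x, 0 ≤ g t' x)
    (hgmeas : ∀ t', Measurable (g t'))
    (hgbdd : ∀ t', ∃ C : ℝ, ∀ x, g t' x ≤ C)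
    -- `{α_t}` is a family of parametric nudging transformations
    (α : ℕ → EuclideanSpace ℝ (Fin d) → ℝ → EuclideanSpace ℝ (Fin d))
    (hαmeas : ∀ t' γ', Measurable fun x => α t' x γ')
    (hαcont : ∀ t' x, ContinuousOn (fun γ' => α t' x γ') (Set.Ici 0))
    (hα0 : ∀ t' x, α t' x 0 = x)
    (Γ : ℕ → ℝ) (hΓ : ∀ t', 0 < Γ t')
    (hinc : ∀ t' x, ∀ γ' ∈ Set.Icc (0 : ℝ) (Γ t'), g t' x ≤ g t' (α t' x γ'))
    (hΔpos : ∀ t', ∀ γ' ∈ Set.Ioc (0 : ℝ) (Γ t'),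
        0 < ∫ x, (g t' (α t' x γ') - g t' x) ∂(pred π0 K g t'))
    -- the nudging parameters used to build the alternative nudged model
    (γseq : ℕ → ℝ) (hγseq : ∀ t', γseq t' ∈ Set.Icc (0 : ℝ) (Γ t'))
    (t : ℕ) (ht : 1 ≤ t)
    (hpos : 0 < ∫ x, g t x ∂(pred π0 K g t))
    -- the hypothesis `ξ_t(g_t) ≤ ξ̄_t^α(g_t^α)`
    (hle : ∫ x, g t x ∂(pred π0 K g t) ≤
        ∫ x, g t (α t x (γseq t))
          ∂(pred π0 (altKernel K (aOf α γseq)) (altG g (aOf α γseq)) t)) :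
    tvDist (pred π0 K g (t + 1))
        (pred π0 (altKernel K (aOf α γseq)) (altG g (aOf α γseq)) (t + 1)) ≤
      (dobNorm (K (t + 1)) / ∫ x, g t x ∂(pred π0 K g t)) * supNorm (g t) *
          tvDist (pred π0 K g t)
            (pred π0 (altKernel K (aOf α γseq)) (altG g (aOf α γseq)) t) +
        (dobNorm (K (t + 1)) / ∫ x, g t x ∂(pred π0 K g t)) *
          (∫ x, (g t (α t x (γseq t)) - g t x) ∂(pred π0 K g t)) +
        ∫ x, tvDist (K (t + 1) x) (K (t + 1) (α t x (γseq t))) ∂(filt π0 K g t) := by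
  obtain ⟨s, rfl⟩ : ∃ s, t = s + 1 := ⟨t - 1, by omega⟩
  -- measurability of the nudging maps
  have hameas : ∀ n, Measurable (aOf α γseq n) := by
    intro n
    cases n with
    | zero => unfold aOf; simpa using measurable_id'
    | succ m => unfold aOf; simpa using hαmeas (m+1) (γseq (m+1))
  -- probability instances for the predictive measures at time s+1
  haveI hξprob : IsProbabilityMeasure (pred π0 K g (s+1)) := by
    rcases filt_prob_or_zero π0 K g hπ0 s with hp | hz
    · exact isProbabilityMeasure_bind hp (hKmeas (s+1)) (hKprob (s+1))
    · exfalso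
      have hzero : pred π0 K g (s+1) = 0 := by
        rw [pred_succ_def, hz]
        exact Measure.bind_zero_left _
      rw [hzero] at hpos
      simp at hpos
  haveI hξbprob : IsProbabilityMeasure
      (pred π0 (altKernel K (aOf α γseq)) (altG g (aOf α γseq)) (s+1)) := by
    rcases filt_prob_or_zero π0 (altKernel K (aOf α γseq)) (altG g (aOf α γseq)) hπ0 s
      with hp | hz
    · refine isProbabilityMeasure_bind hp ?_ ?_
      · exact (hKmeas (s+1)).comp (hameas s)
      · intro x; exact hKprob (s+1) _
    · exfalso
      have hzero : pred π0 (altKernel K (aOf α γseq)) (altG g (aOf α γseq)) (s+1) = 0 := by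
        rw [pred_succ_def, hz]
        exact Measure.bind_zero_left _
      rw [hzero] at hle
      simp at hle
      linarith
  -- bound data for the likelihood
  have hbdd : BddAbove (Set.range fun x => |g (s+1) x|) := by
    obtain ⟨C, hC⟩ := hgbdd (s+1)
    refine ⟨C, ?_⟩
    rintro y ⟨x, rfl⟩
    show |g (s+1) x| ≤ C
    rw [abs_of_nonneg (hg0 (s+1) x)]; exact hC x
  have hMg : ∀ x : EuclideanSpace ℝ (Fin d),
      g (s+1) (α (s+1) x (γseq (s+1))) ≤ supNorm (g (s+1)) := by
    intro x
    have h : |g (s+1) (α (s+1) x (γseq (s+1)))| ≤ ⨆ y, |g (s+1) y| :=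
      le_ciSup hbdd (α (s+1) x (γseq (s+1)))
    rw [abs_of_nonneg (hg0 (s+1) _)] at h
    exact h
  -- Dobrushin norm bounds
  have hdobbdd : BddAbove (Set.range fun p : (EuclideanSpace ℝ (Fin d)) × _ =>
      tvDist (K (s+2) p.1) (K (s+2) p.2)) := by
    refine ⟨2, ?_⟩
    rintro _ ⟨p, rfl⟩
    haveI := hKprob (s+2) p.1; haveI := hKprob (s+2) p.2
    exact tvDist_le_two _ _
  have hdob0 : 0 ≤ dobNorm (K (s+2)) :=
    Real.iSup_nonneg fun p => tvDist_nonneg _ _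
  have hdob : ∀ x y : EuclideanSpace ℝ (Fin d),
      tvDist (K (s+2) (α (s+1) x (γseq (s+1)))) (K (s+2) (α (s+1) y (γseq (s+1))))
        ≤ dobNorm (K (s+2)) := by
    intro x y
    exact le_ciSup hdobbdd ((α (s+1) x (γseq (s+1)), α (s+1) y (γseq (s+1))) :
      _ × _)
  -- apply the key estimate
  have main := key_estimate
    (pred π0 K g (s+1))
    (pred π0 (altKernel K (aOf α γseq)) (altG g (aOf α γseq)) (s+1))
    (g := g (s+1)) (gb := fun x => g (s+1) (α (s+1) x (γseq (s+1))))
    (hgmeas (s+1)) ((hgmeas (s+1)).comp (hαmeas (s+1) (γseq (s+1))))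
    (hg0 (s+1)) (fun x => hinc (s+1) x (γseq (s+1)) (hγseq (s+1)))
    (Mg := supNorm (g (s+1))) hMg
    (K' := K (s+2)) (Kb := fun x => K (s+2) (α (s+1) x (γseq (s+1))))
    (hKmeas (s+2)) ((hKmeas (s+2)).comp (hαmeas (s+1) (γseq (s+1))))
    (hKprob (s+2)) (fun x => hKprob (s+2) _)
    (dob := dobNorm (K (s+2))) hdob0 hdob
    hpos hle
  exact main

end Nudging
end
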